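/- For c = 2/π, the function f_c(t) = (t⁴−1)/(c t⁴ + (2−c) t³ + (2−c) t + c) − 2 arctan((t−1)/(t+1)) satisfies f_c(t) < 0 for all t > 1. -/

import Mathlib

noncomputable def f (c t : ℝ) : ℝ :=
  (t ^ 4 - 1) / (c * t ^ 4 + (2 - c) * t ^ 3 + (2 - c) * t + c)
    - 2 * Real.arctan ((t - 1) / (t + 1))

open Real

lemma arctan_ge_aux (x : ℝ) (hx : 0 ≤ x) : x - x^3/3 ≤ Real.arctan x := by
  have key : ∀ y : ℝ, HasDerivAt (fun y => Real.arctan y - (y - y^3/3)) (y^4/(1+y^2)) y := by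
    intro y
    have h1 := Real.hasDerivAt_arctan y
    have h3 := (hasDerivAt_pow 3 y).div_const 3
    norm_num at h3
    have h2 : HasDerivAt (fun y : ℝ => y - y^3/3) (1 - y^2) y := (hasDerivAt_id y).sub h3
    have h := h1.sub h2
    refine h.congr_deriv ?_
    have hy : (0:ℝ) < 1 + y^2 := by positivity
    field_simp
    ring
  have mono : Monotone (fun y => Real.arctan y - (y - y^3/3)) := by
    apply monotone_of_deriv_nonneg
    · intro y; exact (key y).differentiableAt
    · intro y
      rw [(key y).deriv]
      positivity
  have h := mono hx
  simp [Real.arctan_zero] at h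
  linarith

lemma arctan_le_aux (x : ℝ) (hx : 0 ≤ x) : Real.arctan x ≤ x - x^3/3 + x^5/5 := by
  have key : ∀ y : ℝ, HasDerivAt (fun y => (y - y^3/3 + y^5/5) - Real.arctan y) (y^6/(1+y^2)) y := by
    intro y
    have h1 := Real.hasDerivAt_arctan y
    have h3 := (hasDerivAt_pow 3 y).div_const 3
    norm_num at h3
    have h5 := (hasDerivAt_pow 5 y).div_const 5
    norm_num at h5
    have h2 : HasDerivAt (fun y : ℝ => y - y^3/3 + y^5/5) (1 - y^2 + y^4) y :=
      ((hasDerivAt_id y).sub h3).add h5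
    have h := h2.sub h1
    refine h.congr_deriv ?_
    have hy : (0:ℝ) < 1 + y^2 := by positivity
    field_simp
    ring
  have mono : Monotone (fun y => (y - y^3/3 + y^5/5) - Real.arctan y) := by
    apply monotone_of_deriv_nonneg
    · intro y; exact (key y).differentiableAt
    · intro y
      rw [(key y).deriv]
      positivity
  have h := mono hx
  simp [Real.arctan_zero] at h
  linarith

set_option maxHeartbeats 1000000 in
lemma ratbound (u : ℝ) (hu0 : 0 < u) (hu1 : u < 1) :
    2*u*(1+u^2) < Real.arctan u * (2 + 6*(2/π)*u^2 + (2*(2/π) - 2)*u^4) := by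
  have hπ := Real.pi_pos
  have hπ1 : (3.14:ℝ) < π := Real.pi_gt_d2
  have hπ2 : π < 3.15 := Real.pi_lt_d2
  have hc1 : (0.634:ℝ) < 2/π := by
    rw [lt_div_iff₀ hπ]; nlinarith
  have hc2 : (2:ℝ)/π < 0.637 := by
    rw [div_lt_iff₀ hπ]; nlinarith
  have hu4 : u^4 < 1 := pow_lt_one₀ hu0.le hu1 (by norm_num)
  have hQ : 0 < 2 + 6*(2/π)*u^2 + (2*(2/π) - 2)*u^4 := by
    nlinarith [mul_nonneg (by linarith : (0:ℝ) ≤ 6*(2/π)) (sq_nonneg u),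
      mul_lt_mul_of_pos_left hu4 (show (0:ℝ) < 2 - 2*(2/π) by linarith)]
  rcases le_or_gt u (1/2) with hu2 | hu2
  · have hlow := arctan_ge_aux u hu0.le
    have hbr : (0:ℝ) < 6*(2/π) - 8/3 - 2*u^2 + ((2-2*(2/π))/3)*u^4 := by
      nlinarith [mul_nonneg (by linarith : (0:ℝ) ≤ 2 - 2*(2/π)) (by positivity : (0:ℝ) ≤ u^4)]
    have hstep : 2*u*(1+u^2) < (u - u^3/3) * (2 + 6*(2/π)*u^2 + (2*(2/π) - 2)*u^4) := by
      nlinarith [mul_pos (mul_pos hu0 (mul_pos hu0 hu0)) hbr]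
    nlinarith [mul_le_mul_of_nonneg_right hlow hQ.le]
  · have hu1' : (0:ℝ) < 1 + u := by linarith
    obtain ⟨v, hvdef⟩ : ∃ v : ℝ, v = (1-u)/(1+u) := ⟨_, rfl⟩
    have hv0 : 0 < v := hvdef ▸ div_pos (by linarith) hu1'
    have hv3 : v < 1/3 := by
      rw [hvdef, div_lt_div_iff₀ hu1' (by norm_num)]; linarith
    have hv1 : v < 1 := by rw [hvdef, div_lt_one hu1']; linarith
    have huv : u * v < 1 := by nlinarith
    have harc : Real.arctan u = π/4 - Real.arctan v := by
      have h := Real.arctan_add huv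
      have harg : (u + v) / (1 - u * v) = 1 := by
        have h0 : 1 - u * v ≠ 0 := ne_of_gt (by nlinarith)
        rw [div_eq_one_iff_eq h0, hvdef]
        field_simp
        ring
      rw [harg, Real.arctan_one] at h
      linarith
    have hE : 0 < 4*π*v*(1+v^2) + 3*(1-v^2)^2 + (1-v)^4 := by
      nlinarith [mul_pos (mul_pos (by linarith : (0:ℝ) < 4*π) hv0)
        (by positivity : (0:ℝ) < 1 + v^2), sq_nonneg (1 - v^2), sq_nonneg ((1-v)^2)]
    have hG : π*(1-v^4) < (π/4 - (v - v^3/3 + v^5/5)) *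
        (4*π*v*(1+v^2) + 3*(1-v^2)^2 + (1-v)^4) := by
      have hv4 : v^4 ≤ (1/3:ℝ)^4 := pow_le_pow_left₀ hv0.le hv3.le 4
      have hv7 : v^7 ≤ (1/3:ℝ)^7 := pow_le_pow_left₀ hv0.le hv3.le 7
      have hv8 : v^8 ≤ (1/3:ℝ)^8 := pow_le_pow_left₀ hv0.le hv3.le 8
      have c1 : (2.7:ℝ) < π^2 - π - 4 := by nlinarith
      have c2 : (-8.6:ℝ)*v ≤ (4 - 4*π)*v :=
        mul_le_mul_of_nonneg_right (by nlinarith) hv0.le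
      have c3 : (8:ℝ)*v^2 ≤ (π^2 - π + 4/3)*v^2 :=
        mul_le_mul_of_nonneg_right (by nlinarith) (sq_nonneg v)
      have c4 : (0:ℝ) ≤ (8/3 - 2*π/3)*v^3 :=
        mul_nonneg (by nlinarith) (by positivity)
      have c5 : (0:ℝ) ≤ ((8*π-8)/15)*v^5 :=
        mul_nonneg (by nlinarith) (by positivity)
      have c6 : (0:ℝ) ≤ (4/3:ℝ)*v^6 := by positivity
      have c7 : -1.72*v^7 ≤ ((4 - 4*π)/5)*v^7 :=
        mul_le_mul_of_nonneg_right (by nlinarith) (by positivity)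
      have hH : (0:ℝ) < (π^2 - π - 4) + (4 - 4*π)*v + (π^2 - π + 4/3)*v^2
          + (8/3 - 2*π/3)*v^3 - (24/5)*v^4 + ((8*π-8)/15)*v^5 + (4/3)*v^6
          + ((4 - 4*π)/5)*v^7 - (4/5)*v^8 := by
        nlinarith [sq_nonneg (16*v - 8.6)]
      have hexp : (π/4 - (v - v^3/3 + v^5/5)) *
          (4*π*v*(1+v^2) + 3*(1-v^2)^2 + (1-v)^4) - π*(1-v^4)
          = v * ((π^2 - π - 4) + (4 - 4*π)*v + (π^2 - π + 4/3)*v^2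
          + (8/3 - 2*π/3)*v^3 - (24/5)*v^4 + ((8*π-8)/15)*v^5 + (4/3)*v^6
          + ((4 - 4*π)/5)*v^7 - (4/5)*v^8) := by ring
      nlinarith [mul_pos hv0 hH]
    have hcross : 2*u*(1+u^2) * (4*π*v*(1+v^2) + 3*(1-v^2)^2 + (1-v)^4)
        = π*(1-v^4) * (2 + 6*(2/π)*u^2 + (2*(2/π) - 2)*u^4) := by
      rw [hvdef]
      field_simp [hπ.ne', hu1'.ne']
      ring
    have h1 : π/4 - (v - v^3/3 + v^5/5) ≤ Real.arctan u := by
      rw [harc]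
      have := arctan_le_aux v hv0.le
      linarith
    have h2 := mul_lt_mul_of_pos_right hG hQ
    rw [← hcross] at h2
    have h2' : (2*u*(1+u^2)) * (4*π*v*(1+v^2) + 3*(1-v^2)^2 + (1-v)^4)
        < ((π/4 - (v - v^3/3 + v^5/5)) * (2 + 6*(2/π)*u^2 + (2*(2/π) - 2)*u^4))
          * (4*π*v*(1+v^2) + 3*(1-v^2)^2 + (1-v)^4) := by
      linarith [h2, (by ring : (π/4 - (v - v^3/3 + v^5/5)) * (4*π*v*(1+v^2) + 3*(1-v^2)^2 + (1-v)^4) * (2 + 6*(2/π)*u^2 + (2*(2/π) - 2)*u^4) = ((π/4 - (v - v^3/3 + v^5/5)) * (2 + 6*(2/π)*u^2 + (2*(2/π) - 2)*u^4)) * (4*π*v*(1+v^2) + 3*(1-v^2)^2 + (1-v)^4))]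
    have h3 := lt_of_mul_lt_mul_right h2' hE.le
    linarith [h3, mul_le_mul_of_nonneg_right h1 hQ.le]

set_option maxHeartbeats 1000000 in
theorem stmt_12 : ∀ t : ℝ, 1 < t → f (2 / Real.pi) t < 0 := by
  intro t ht
  have hπ := Real.pi_pos
  have ht1 : (0:ℝ) < t + 1 := by linarith
  have hu0 : 0 < (t-1)/(t+1) := div_pos (by linarith) ht1
  have hu1 : (t-1)/(t+1) < 1 := by rw [div_lt_one ht1]; linarith
  have hkey := ratbound _ hu0 hu1
  have hc1 : (0:ℝ) < 2/π := by positivity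
  have hc2 : (2:ℝ)/π < 1 := by
    rw [div_lt_one hπ]; linarith [Real.pi_gt_d2]
  have hu4 : ((t-1)/(t+1))^4 < 1 := pow_lt_one₀ hu0.le hu1 (by norm_num)
  have hQ : 0 < 2 + 6*(2/π)*((t-1)/(t+1))^2 + (2*(2/π) - 2)*((t-1)/(t+1))^4 := by
    nlinarith [mul_nonneg (by positivity : (0:ℝ) ≤ 6*(2/π)) (sq_nonneg ((t-1)/(t+1))),
      mul_lt_mul_of_pos_left hu4 (show (0:ℝ) < 2 - 2*(2/π) by linarith)]
  have hD : 0 < (2/π) * t ^ 4 + (2 - 2/π) * t ^ 3 + (2 - 2/π) * t + 2/π := by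
    have h3 : (0:ℝ) < t^3 := by positivity
    have h4 : (0:ℝ) < t^4 := by positivity
    nlinarith
  have hfrac : (t ^ 4 - 1) / ((2/π) * t ^ 4 + (2 - 2/π) * t ^ 3 + (2 - 2/π) * t + 2/π)
      = 4*((t-1)/(t+1))*(1+((t-1)/(t+1))^2)
        / (2 + 6*(2/π)*((t-1)/(t+1))^2 + (2*(2/π) - 2)*((t-1)/(t+1))^4) := by
    rw [div_eq_div_iff hD.ne' hQ.ne']
    field_simp [hπ.ne', ht1.ne']
    ring
  have hdiv : 2*((t-1)/(t+1))*(1+((t-1)/(t+1))^2)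
      / (2 + 6*(2/π)*((t-1)/(t+1))^2 + (2*(2/π) - 2)*((t-1)/(t+1))^4)
      < Real.arctan ((t-1)/(t+1)) := (div_lt_iff₀ hQ).mpr hkey
  show (t ^ 4 - 1) / ((2/π) * t ^ 4 + (2 - 2/π) * t ^ 3 + (2 - 2/π) * t + 2/π)
      - 2 * Real.arctan ((t - 1) / (t + 1)) < 0
  rw [hfrac]
  have heq : 4*((t-1)/(t+1))*(1+((t-1)/(t+1))^2)
        / (2 + 6*(2/π)*((t-1)/(t+1))^2 + (2*(2/π) - 2)*((t-1)/(t+1))^4)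
      = 2*(2*((t-1)/(t+1))*(1+((t-1)/(t+1))^2)
        / (2 + 6*(2/π)*((t-1)/(t+1))^2 + (2*(2/π) - 2)*((t-1)/(t+1))^4)) := by
    ring
  rw [heq]
  linarith
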